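/- Suppose p = ω((log n)/n). Then with high probability the random graph G = G(n, p) satisfies c(G) = c_{1/100}(G) ≥ n/1000; that is, w.h.p. every vertex set S ⊆ V(G) with |S| ≤ n/1000 induces a subgraph with average degree less than d(G)/100. -/

import Mathlib

open Finset SimpleGraph
open scoped Classical

variable {V : Type*}

/-- Number of ordered adjacent pairs inside `S` (= sum of degrees in the induced subgraph). -/
noncomputable def degSum [Fintype V] (G : SimpleGraph V) (S : Finset V) : ℕ :=
  ((S ×ˢ S).filter fun p => G.Adj p.1 p.2).card

/-- Average degree of the subgraph of `G` induced on `S`. -/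
noncomputable def avgDegOn [Fintype V] (G : SimpleGraph V) (S : Finset V) : ℝ :=
  (degSum G S : ℝ) / (S.card : ℝ)

/-- Average degree of `G`. -/
noncomputable def avgDeg [Fintype V] (G : SimpleGraph V) : ℝ :=
  avgDegOn G Finset.univ

/-- `cruxSize α G` is the minimum order of a subgraph of `G` with average degree at least
`α · d(G)` (equivalently, of a vertex set inducing such a subgraph). -/
noncomputable def cruxSize [Fintype V] (α : ℝ) (G : SimpleGraph V) : ℕ :=
  sInf {m | ∃ S : Finset V, S.card = m ∧ α * avgDeg G ≤ avgDegOn G S}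

/-- Number of edges between `S` and its complement (counted as ordered pairs from `S` out). -/
noncomputable def crossPairs [Fintype V] (G : SimpleGraph V) (S : Finset V) : ℕ :=
  ((S ×ˢ Sᶜ).filter fun p => G.Adj p.1 p.2).card

/-- External neighbourhood of `A` in the graph `G − D`. -/
noncomputable def nbhdIn [Fintype V] (G : SimpleGraph V) (D A : Finset V) : Finset V :=
  Finset.univ.filter fun v => v ∉ D ∧ v ∉ A ∧ ∃ u ∈ A, G.Adj u v

/-- Ball of radius `r` around `A` in the graph `G − D`. -/
noncomputable def ballIn [Fintype V] (G : SimpleGraph V) (D A : Finset V) : ℕ → Finset V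
  | 0 => A
  | r + 1 => ballIn G D A r ∪ nbhdIn G D (ballIn G D A r)

/-- `G` has the `(a, b, ρ)`-expansion-property. -/
def ExpansionProperty [Fintype V] (G : SimpleGraph V) (a b ρ : ℝ) : Prop :=
  ∀ X : Finset V, a ≤ (X.card : ℝ) → (X.card : ℝ) ≤ b →
    ρ * (X.card : ℝ) ≤ ((nbhdIn G ∅ X).card : ℝ)

/-- The Komlós–Szemerédi expansion rate function. -/
noncomputable def rho (ε k x : ℝ) : ℝ :=
  if k / 5 ≤ x then ε / (Real.log (15 * x / k)) ^ 2 else 0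

/-- `(ε, k)`-robust-expander. -/
def RobustExpander [Fintype V] (G : SimpleGraph V) (ε k : ℝ) : Prop :=
  ∀ X : Finset V, k / 2 ≤ (X.card : ℝ) → (X.card : ℝ) ≤ (Fintype.card V : ℝ) / 2 →
    ∀ F : Finset (Sym2 V), ↑F ⊆ G.edgeSet →
      (F.card : ℝ) ≤ avgDeg G * rho ε k (X.card : ℝ) * (X.card : ℝ) →
      rho ε k (X.card : ℝ) * (X.card : ℝ) ≤ ((nbhdIn (G.deleteEdges ↑F) ∅ X).card : ℝ)

/-- `G` contains a subdivision of the graph `H` (on vertex set `Fin t`): there are `t` distinct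
core vertices and internally vertex-disjoint paths for the edges of `H`, whose internal
vertices avoid the cores. -/
def ContainsSubdivision {t : ℕ} (H : SimpleGraph (Fin t)) (G : SimpleGraph V) : Prop :=
  ∃ c : Fin t ↪ V, ∃ p : ∀ i j : Fin t, i < j → H.Adj i j → G.Walk (c i) (c j),
    (∀ i j (h : i < j) (ha : H.Adj i j), (p i j h ha).IsPath) ∧
    (∀ i j (h : i < j) (ha : H.Adj i j) (k : Fin t),
        c k ∈ (p i j h ha).support → k = i ∨ k = j) ∧
    (∀ i j (h : i < j) (ha : H.Adj i j) i' j' (h' : i' < j') (ha' : H.Adj i' j'),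
        (i, j) ≠ (i', j') →
        Disjoint ((p i j h ha).support.toFinset \ {c i, c j})
          ((p i' j' h' ha').support.toFinset \ {c i', c j'}))

/-- `G` contains a copy of `H` as a subgraph. -/
def ContainsCopy {W₀ : Type*} (H : SimpleGraph W₀) (G : SimpleGraph V) : Prop :=
  ∃ f : W₀ → V, Function.Injective f ∧ ∀ a b, H.Adj a b → G.Adj (f a) (f b)

/-- Clique number of `G`. -/
noncomputable def cliqueNumber [Fintype V] (G : SimpleGraph V) : ℕ :=
  sSup {n | ∃ s : Finset V, G.IsNClique n s}

/-- Probability, under the Erdős–Rényi model `G(n, p)`, of an event `E` of graphs on `Fin n`: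
sum over all edge sets `A` of `p^{|A|}(1-p)^{N-|A|}` for graphs satisfying `E`. -/
noncomputable def erProb (n : ℕ) (p : ℝ) (E : SimpleGraph (Fin n) → Prop) : ℝ :=
  ∑ A ∈ ((Finset.univ : Finset (Sym2 (Fin n))).filter fun e => ¬ e.IsDiag).powerset,
    if E (SimpleGraph.fromEdgeSet ↑A) then
      p ^ A.card *
        (1 - p) ^ (((Finset.univ : Finset (Sym2 (Fin n))).filter fun e => ¬ e.IsDiag).card
          - A.card)
    else 0


section Aux
set_option linter.unusedSectionVars false
set_option linter.unusedVariables false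

variable {ι : Type*} [DecidableEq ι]

lemma weight_nonneg {p : ℝ} (hp0 : 0 ≤ p) (hp1 : p ≤ 1) (s A : Finset ι) :
    0 ≤ p ^ A.card * (1 - p) ^ (s.card - A.card) := by
  have h : (0:ℝ) ≤ 1 - p := by linarith
  positivity

lemma sum_weight (s : Finset ι) (p : ℝ) :
    ∑ A ∈ s.powerset, p ^ A.card * (1 - p) ^ (s.card - A.card) = 1 := by
  have h := Finset.prod_add (fun _ : ι => p) (fun _ => 1 - p) s
  simp only [Finset.prod_const] at h
  have h2 : ∀ A ∈ s.powerset, p ^ A.card * (1-p) ^ ((s \ A).card)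
      = p ^ A.card * (1 - p) ^ (s.card - A.card) := by
    intro A hA
    rw [Finset.card_sdiff_of_subset (Finset.mem_powerset.1 hA)]
  rw [Finset.sum_congr rfl h2] at h
  rw [← h]
  norm_num

lemma mgf_eq (s T : Finset ι) (hT : T ⊆ s) (p l : ℝ) :
    ∑ A ∈ s.powerset, p ^ A.card * (1 - p) ^ (s.card - A.card) * l ^ ((A ∩ T).card)
      = (1 - p + p * l) ^ T.card := by
  have h := Finset.prod_add (fun i : ι => p * (if i ∈ T then l else 1)) (fun _ => 1 - p) s
  have hL : ∀ A ∈ s.powerset,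
      (∏ i ∈ A, p * (if i ∈ T then l else 1)) * ∏ _i ∈ s \ A, (1 - p)
        = p ^ A.card * (1 - p) ^ (s.card - A.card) * l ^ ((A ∩ T).card) := by
    intro A hA
    rw [Finset.prod_mul_distrib, Finset.prod_const, Finset.prod_const,
      Finset.card_sdiff_of_subset (Finset.mem_powerset.1 hA), Finset.prod_ite_mem]
    rw [Finset.prod_const]
    ring
  rw [Finset.sum_congr rfl hL] at h
  rw [← h]
  have : ∀ i ∈ s, p * (if i ∈ T then l else 1) + (1 - p)
      = (if i ∈ T then (1 - p + p * l) else 1) := by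
    intro i _
    split <;> ring
  rw [Finset.prod_congr rfl this, Finset.prod_ite_mem, Finset.inter_eq_right.2 hT,
    Finset.prod_const]

lemma sum_pow_card (s : Finset ι) (x : ℝ) :
    ∑ A ∈ s.powerset, x ^ A.card = (1 + x) ^ s.card := by
  have h := Finset.prod_add (fun _ : ι => x) (fun _ => 1) s
  simp only [Finset.prod_const, Finset.prod_const_one, mul_one, one_pow] at h
  rw [← h]
  congr 1
  ring

lemma chernoff_up {p : ℝ} (hp0 : 0 ≤ p) (hp1 : p ≤ 1) (s T : Finset ι) (hT : T ⊆ s) (t : ℝ) :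
    ∑ A ∈ s.powerset,
        (if t ≤ (((A ∩ T).card : ℕ) : ℝ) then p ^ A.card * (1 - p) ^ (s.card - A.card) else 0)
      ≤ Real.exp ((Real.exp 1 - 1) * p * T.card - t) := by
  have key : ∀ A ∈ s.powerset,
      (if t ≤ (((A ∩ T).card : ℕ) : ℝ) then p ^ A.card * (1 - p) ^ (s.card - A.card) else 0)
        ≤ (p ^ A.card * (1 - p) ^ (s.card - A.card) * (Real.exp 1) ^ ((A ∩ T).card))
            * Real.exp (-t) := by
    intro A _
    have hw := weight_nonneg hp0 hp1 s A
    split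
    · rename_i hc
      have h2 : 1 ≤ (Real.exp 1) ^ ((A ∩ T).card) * Real.exp (-t) := by
        rw [Real.exp_one_pow, ← Real.exp_add]
        exact Real.one_le_exp (by linarith)
      have h3 := mul_le_mul_of_nonneg_left h2 hw
      rw [mul_one] at h3
      calc p ^ A.card * (1 - p) ^ (s.card - A.card) ≤ _ := h3
        _ = _ := by ring
    · positivity
  calc _ ≤ ∑ A ∈ s.powerset,
        (p ^ A.card * (1 - p) ^ (s.card - A.card) * (Real.exp 1) ^ ((A ∩ T).card))
          * Real.exp (-t) := Finset.sum_le_sum key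
    _ = (1 - p + p * Real.exp 1) ^ T.card * Real.exp (-t) := by
        rw [← Finset.sum_mul, mgf_eq s T hT]
    _ ≤ Real.exp ((Real.exp 1 - 1) * p) ^ T.card * Real.exp (-t) := by
        apply mul_le_mul_of_nonneg_right _ (Real.exp_pos _).le
        apply pow_le_pow_left₀ (by nlinarith [Real.exp_one_gt_d9])
        have := Real.add_one_le_exp ((Real.exp 1 - 1) * p)
        linarith
    _ = Real.exp ((Real.exp 1 - 1) * p * T.card - t) := by
        rw [← Real.exp_nat_mul, ← Real.exp_add]
        ring_nf

lemma chernoff_down {p : ℝ} (hp0 : 0 ≤ p) (hp1 : p ≤ 1) (s T : Finset ι) (hT : T ⊆ s)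
    (t : ℝ) (ht : 0 ≤ t) :
    ∑ A ∈ s.powerset,
        (if (((A ∩ T).card : ℕ) : ℝ) ≤ t then p ^ A.card * (1 - p) ^ (s.card - A.card) else 0)
      ≤ Real.exp (t * Real.log 2 - p * T.card / 2) := by
  have key : ∀ A ∈ s.powerset,
      (if (((A ∩ T).card : ℕ) : ℝ) ≤ t then p ^ A.card * (1 - p) ^ (s.card - A.card) else 0)
        ≤ (p ^ A.card * (1 - p) ^ (s.card - A.card) * ((1:ℝ)/2) ^ ((A ∩ T).card))
            * Real.exp (t * Real.log 2) := by
    intro A _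
    have hw := weight_nonneg hp0 hp1 s A
    split
    · rename_i hc
      have h2 : (1:ℝ) ≤ ((1:ℝ)/2) ^ ((A ∩ T).card) * Real.exp (t * Real.log 2) := by
        have he : ((1:ℝ)/2) = Real.exp (-Real.log 2) := by
          rw [Real.exp_neg, Real.exp_log two_pos]; norm_num
        rw [he, ← Real.exp_nat_mul, ← Real.exp_add]
        apply Real.one_le_exp
        have hl2 : 0 ≤ Real.log 2 := Real.log_nonneg one_le_two
        nlinarith
      have h3 := mul_le_mul_of_nonneg_left h2 hw
      rw [mul_one] at h3
      calc p ^ A.card * (1 - p) ^ (s.card - A.card) ≤ _ := h3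
        _ = _ := by ring
    · positivity
  calc _ ≤ _ := Finset.sum_le_sum key
    _ = (1 - p + p * (1/2)) ^ T.card * Real.exp (t * Real.log 2) := by
        rw [← Finset.sum_mul, mgf_eq s T hT]
    _ ≤ Real.exp (-(p/2)) ^ T.card * Real.exp (t * Real.log 2) := by
        apply mul_le_mul_of_nonneg_right _ (Real.exp_pos _).le
        apply pow_le_pow_left₀ (by linarith)
        have := Real.add_one_le_exp (-(p/2))
        linarith
    _ ≤ _ := by
        rw [← Real.exp_nat_mul, ← Real.exp_add, Real.exp_le_exp]
        linarith

end Aux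

section Graph
set_option linter.unusedSectionVars false
set_option linter.unusedVariables false

noncomputable def edgesIn {V : Type*} [Fintype V] (S : Finset V) : Finset (Sym2 V) :=
  Finset.univ.filter fun e => ¬ e.IsDiag ∧ ∀ v ∈ e, v ∈ S

variable {V : Type*} [Fintype V]

lemma degSum_eq [DecidableEq V] (A : Finset (Sym2 V)) (S : Finset V) :
    degSum (fromEdgeSet (↑A : Set (Sym2 V))) S = 2 * (A ∩ edgesIn S).card := by
  classical
  unfold degSum
  have hmap : ∀ x ∈ (S ×ˢ S).filter
      (fun p : V × V => (fromEdgeSet (↑A : Set (Sym2 V))).Adj p.1 p.2),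
      s(x.1, x.2) ∈ A ∩ edgesIn S := by
    intro x hx
    simp only [Finset.mem_filter, Finset.mem_product, fromEdgeSet_adj, Finset.mem_coe] at hx
    obtain ⟨⟨h1, h2⟩, h3, h4⟩ := hx
    simp only [Finset.mem_inter, edgesIn, Finset.mem_filter, Finset.mem_univ, true_and]
    refine ⟨h3, ?_, ?_⟩
    · simp [Sym2.mk_isDiag_iff, h4]
    · intro v hv
      rcases Sym2.mem_iff.1 hv with rfl | rfl <;> assumption
  rw [Finset.filter_congr_decidable, Finset.card_eq_sum_card_fiberwise hmap]
  rw [Finset.sum_congr rfl (g := fun _ => 2), Finset.sum_const, smul_eq_mul, mul_comm]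
  intro e he
  simp only [Finset.mem_inter, edgesIn, Finset.mem_filter, Finset.mem_univ, true_and] at he
  obtain ⟨heA, hnd, hmem⟩ := he
  induction e using Sym2.ind with
  | _ a b =>
    have hab : a ≠ b := by simpa [Sym2.mk_isDiag_iff] using hnd
    have haS : a ∈ S := hmem a (by simp)
    have hbS : b ∈ S := hmem b (by simp)
    have : ((S ×ˢ S).filter
        (fun p : V × V => (fromEdgeSet (↑A : Set (Sym2 V))).Adj p.1 p.2)).filter
        (fun x => s(x.1, x.2) = s(a, b)) = {(a, b), (b, a)} := by
      ext ⟨u, v⟩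
      simp only [Finset.mem_filter, Finset.mem_product, fromEdgeSet_adj, Finset.mem_coe,
        Finset.mem_insert, Finset.mem_singleton, Prod.mk.injEq, Sym2.eq_iff]
      have hswap : s(b, a) ∈ A := by rwa [Sym2.eq_swap]
      have hba := hab.symm
      constructor
      · intro h; tauto
      · rintro (⟨rfl, rfl⟩ | ⟨rfl, rfl⟩) <;> tauto
    rw [this]
    rw [Finset.card_insert_of_notMem (by simp [hab]), Finset.card_singleton]

lemma two_mul_edgesIn_card_le [DecidableEq V] (S : Finset V) :
    2 * (edgesIn S).card ≤ S.card ^ 2 := by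
  have h := degSum_eq (edgesIn S) S
  rw [Finset.inter_self] at h
  rw [← h]
  unfold degSum
  calc _ ≤ (S ×ˢ S).card := Finset.card_le_card (fun x hx => by simp only [Finset.mem_filter] at hx; exact hx.1)
    _ = S.card ^ 2 := by rw [Finset.card_product]; ring

lemma edgeFinset_fromEdgeSet (A : Finset (Sym2 V)) (hA : ∀ e ∈ A, ¬ e.IsDiag) :
    (fromEdgeSet (↑A : Set (Sym2 V))).edgeFinset = A := by
  ext e
  simp only [mem_edgeFinset, edgeSet_fromEdgeSet, Set.mem_diff, Finset.mem_coe,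
    Set.mem_setOf_eq]
  exact ⟨fun h => h.1, fun h => ⟨h, hA e h⟩⟩

lemma degSum_univ_fromEdgeSet [DecidableEq V] (A : Finset (Sym2 V)) (hA : ∀ e ∈ A, ¬ e.IsDiag) :
    degSum (fromEdgeSet (↑A : Set (Sym2 V))) Finset.univ = 2 * A.card := by
  rw [degSum_eq A]
  congr 2
  rw [Finset.inter_eq_left]
  intro e he
  simp [edgesIn, hA e he]

end Graph


section Prob
set_option linter.unusedSectionVars false
set_option linter.unusedVariables false

/-- The set of potential edges of a graph on `Fin n`. -/
noncomputable def EdgeU (n : ℕ) : Finset (Sym2 (Fin n)) :=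
  (Finset.univ : Finset (Sym2 (Fin n))).filter fun e => ¬ e.IsDiag

lemma erProb_def (n : ℕ) (p : ℝ) (E : SimpleGraph (Fin n) → Prop) :
    erProb n p E = ∑ A ∈ (EdgeU n).powerset,
      if E (SimpleGraph.fromEdgeSet ↑A) then
        p ^ A.card * (1 - p) ^ ((EdgeU n).card - A.card) else 0 := rfl

lemma mem_powerset_nondiag {n : ℕ} {A : Finset (Sym2 (Fin n))} (hA : A ∈ (EdgeU n).powerset) :
    ∀ e ∈ A, ¬ e.IsDiag := by
  intro e he
  have := Finset.mem_powerset.1 hA he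
  simp only [EdgeU, Finset.mem_filter] at this
  exact this.2

lemma edgesIn_subset_EdgeU {n : ℕ} (S : Finset (Fin n)) : edgesIn S ⊆ EdgeU n := by
  intro e he
  simp only [edgesIn, EdgeU, Finset.mem_filter, Finset.mem_univ, true_and] at *
  exact he.1

variable {n : ℕ} {p : ℝ}

lemma erProb_nonneg (hp0 : 0 ≤ p) (hp1 : p ≤ 1) (E : SimpleGraph (Fin n) → Prop) :
    0 ≤ erProb n p E := by
  rw [erProb_def]
  apply Finset.sum_nonneg
  intro A hA
  split
  · exact weight_nonneg hp0 hp1 _ _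
  · exact le_refl 0

lemma erProb_add_compl (E : SimpleGraph (Fin n) → Prop) :
    erProb n p E + erProb n p (fun G => ¬ E G) = 1 := by
  rw [erProb_def, erProb_def, ← Finset.sum_add_distrib]
  calc _ = ∑ A ∈ (EdgeU n).powerset, p ^ A.card * (1 - p) ^ ((EdgeU n).card - A.card) := by
        apply Finset.sum_congr rfl
        intro A hA
        by_cases h : E (SimpleGraph.fromEdgeSet ↑A) <;> simp [h]
    _ = 1 := sum_weight _ _

lemma erProb_le_one (hp0 : 0 ≤ p) (hp1 : p ≤ 1) (E : SimpleGraph (Fin n) → Prop) :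
    erProb n p E ≤ 1 := by
  have h := erProb_add_compl (p := p) E
  have h2 := erProb_nonneg hp0 hp1 (fun G => ¬ E G)
  linarith

lemma erProb_mono (hp0 : 0 ≤ p) (hp1 : p ≤ 1) {E F : SimpleGraph (Fin n) → Prop}
    (h : ∀ A ∈ (EdgeU n).powerset, E (SimpleGraph.fromEdgeSet ↑A) →
      F (SimpleGraph.fromEdgeSet ↑A)) :
    erProb n p E ≤ erProb n p F := by
  rw [erProb_def, erProb_def]
  apply Finset.sum_le_sum
  intro A hA
  by_cases hE : E (SimpleGraph.fromEdgeSet ↑A)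
  · rw [if_pos hE, if_pos (h A hA hE)]
  · rw [if_neg hE]
    split
    · exact weight_nonneg hp0 hp1 _ _
    · exact le_refl 0

lemma erProb_or_le (hp0 : 0 ≤ p) (hp1 : p ≤ 1) (E F : SimpleGraph (Fin n) → Prop) :
    erProb n p (fun G => E G ∨ F G) ≤ erProb n p E + erProb n p F := by
  rw [erProb_def, erProb_def, erProb_def, ← Finset.sum_add_distrib]
  apply Finset.sum_le_sum
  intro A hA
  have hw := weight_nonneg (s := EdgeU n) (A := A) hp0 hp1
  by_cases hE : E (SimpleGraph.fromEdgeSet ↑A) <;>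
    by_cases hF : F (SimpleGraph.fromEdgeSet ↑A) <;>
    simp only [hE, hF, if_true, if_false, or_true, true_or, false_or, or_false] <;>
    first
      | linarith
      | simp

lemma erProb_exists_le (hp0 : 0 ≤ p) (hp1 : p ≤ 1) {ι : Type*} (I : Finset ι)
    (Q : ι → SimpleGraph (Fin n) → Prop) :
    erProb n p (fun G => ∃ i ∈ I, Q i G) ≤ ∑ i ∈ I, erProb n p (Q i) := by
  rw [erProb_def]
  refine le_trans (Finset.sum_le_sum (g := fun (A : Finset (Sym2 (Fin n))) => ∑ i ∈ I,
      (if Q i (SimpleGraph.fromEdgeSet ↑A) then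
        p ^ A.card * (1 - p) ^ ((EdgeU n).card - A.card) else 0)) ?_) ?_
  · intro A hA
    have hw := weight_nonneg (s := EdgeU n) (A := A) hp0 hp1
    split
    · rename_i hex
      obtain ⟨i₀, hi₀, hq⟩ := hex
      have hle := Finset.single_le_sum (f := fun i =>
          (if Q i (SimpleGraph.fromEdgeSet ↑A) then
            p ^ A.card * (1 - p) ^ ((EdgeU n).card - A.card) else 0))
        (fun i _ => by split; exacts [hw, le_refl 0]) hi₀
      simp only [if_pos hq] at hle
      exact hle
    · apply Finset.sum_nonneg
      intro i _
      split
      · exact hw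
      · exact le_refl 0
  · rw [Finset.sum_comm]
    exact le_of_eq (Finset.sum_congr rfl fun i _ => (erProb_def n p (Q i)).symm)

lemma erProb_degSum_ge (hp0 : 0 ≤ p) (hp1 : p ≤ 1) (S : Finset (Fin n)) (t : ℝ) :
    erProb n p (fun G => 2 * t ≤ (degSum G S : ℝ))
      ≤ Real.exp ((Real.exp 1 - 1) * p * (edgesIn S).card - t) := by
  rw [erProb_def]
  calc _ = ∑ A ∈ (EdgeU n).powerset,
      (if t ≤ (((A ∩ edgesIn S).card : ℕ) : ℝ) then
        p ^ A.card * (1 - p) ^ ((EdgeU n).card - A.card) else 0) := by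
        apply Finset.sum_congr rfl
        intro A hA
        have hiff : (2 * t ≤ ((degSum (SimpleGraph.fromEdgeSet ↑A) S : ℕ) : ℝ)) ↔
            (t ≤ (((A ∩ edgesIn S).card : ℕ) : ℝ)) := by
          rw [degSum_eq A S]
          push_cast
          constructor <;> intro <;> linarith
        rw [hiff]
    _ ≤ _ := chernoff_up hp0 hp1 (EdgeU n) (edgesIn S) (edgesIn_subset_EdgeU S) t

lemma erProb_degSum_univ_le (hp0 : 0 ≤ p) (hp1 : p ≤ 1) (t : ℝ) (ht : 0 ≤ t) :
    erProb n p (fun G => (degSum G Finset.univ : ℝ) ≤ 2 * t)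
      ≤ Real.exp (t * Real.log 2 - p * (EdgeU n).card / 2) := by
  rw [erProb_def]
  calc _ = ∑ A ∈ (EdgeU n).powerset,
      (if (((A ∩ EdgeU n).card : ℕ) : ℝ) ≤ t then
        p ^ A.card * (1 - p) ^ ((EdgeU n).card - A.card) else 0) := by
        apply Finset.sum_congr rfl
        intro A hA
        have hAU : A ∩ EdgeU n = A := Finset.inter_eq_left.2 (Finset.mem_powerset.1 hA)
        have hiff : (((degSum (SimpleGraph.fromEdgeSet ↑A) (Finset.univ : Finset (Fin n)) : ℕ) : ℝ) ≤ 2 * t) ↔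
            ((((A ∩ EdgeU n).card : ℕ) : ℝ) ≤ t) := by
          rw [degSum_univ_fromEdgeSet A (mem_powerset_nondiag hA), hAU]
          push_cast
          constructor <;> intro <;> linarith
        rw [hiff]
    _ ≤ _ := chernoff_down hp0 hp1 (EdgeU n) (EdgeU n) (le_refl _) t ht

end Prob


section Main
set_option linter.unusedSectionVars false
set_option linter.unusedVariables false

lemma card_EdgeU (n : ℕ) : (EdgeU n).card = n.choose 2 := by
  have h := Sym2.card_subtype_not_diag (α := Fin n)
  rw [Fintype.card_fin] at h
  rw [← h, Fintype.card_subtype]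
  rfl

lemma card_EdgeU_ge {n : ℕ} (hn : 2 ≤ n) : ((n:ℝ)^2 / 4) ≤ ((EdgeU n).card : ℝ) := by
  rw [card_EdgeU, Nat.cast_choose_two]
  have : (2:ℝ) ≤ (n:ℝ) := by exact_mod_cast hn
  nlinarith

lemma good_event {n : ℕ} {p : ℝ} (hn : 2 ≤ n) (hp : 0 < p) (G : SimpleGraph (Fin n))
    (h1 : ¬ ((degSum G Finset.univ : ℝ) ≤ 2 * ((n:ℝ)^2 * p / 8)))
    (h2 : ∀ S ∈ Finset.univ.powerset.filter
        (fun S : Finset (Fin n) => S.Nonempty ∧ (S.card:ℝ) ≤ (n:ℝ)/1000),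
        ¬ (2 * ((S.card:ℝ) * (n:ℝ) * p / 800) ≤ (degSum G S : ℝ))) :
    ((n:ℝ) / 1000 ≤ (cruxSize (1 / 100) G : ℝ)) ∧
      ∀ S : Finset (Fin n), (S.card : ℝ) ≤ (n:ℝ) / 1000 →
        avgDegOn G S < avgDeg G / 100 := by
  have hn0 : (0:ℝ) < n := by positivity
  push_neg at h1
  have havg : avgDeg G = (degSum G Finset.univ : ℝ) / n := by
    unfold avgDeg avgDegOn
    rw [Finset.card_univ, Fintype.card_fin]
  have havg4 : (n:ℝ) * p / 4 < avgDeg G := by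
    rw [havg, lt_div_iff₀ hn0]
    nlinarith
  have havgpos : 0 < avgDeg G := lt_trans (by positivity) havg4
  have part2 : ∀ S : Finset (Fin n), (S.card : ℝ) ≤ (n:ℝ) / 1000 →
      avgDegOn G S < avgDeg G / 100 := by
    intro S hcard
    by_cases hS : S.Nonempty
    · have hm0 : (0:ℝ) < S.card := by
        have := Finset.card_pos.2 hS
        exact_mod_cast this
      have h2S := h2 S (by
        simp only [Finset.mem_filter, Finset.mem_powerset]
        exact ⟨Finset.subset_univ S, hS, hcard⟩)
      push_neg at h2S
      unfold avgDegOn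
      have hstep : (degSum G S : ℝ) / S.card < (n:ℝ) * p / 400 := by
        rw [div_lt_iff₀ hm0]
        nlinarith
      linarith
    · rw [Finset.not_nonempty_iff_eq_empty] at hS
      subst hS
      unfold avgDegOn
      simp only [Finset.card_empty, Nat.cast_zero, div_zero]
      linarith
  refine ⟨?_, part2⟩
  have hne : {m | ∃ S : Finset (Fin n), S.card = m ∧
      (1 / 100 : ℝ) * avgDeg G ≤ avgDegOn G S}.Nonempty := by
    refine ⟨n, Finset.univ, ?_, ?_⟩
    · rw [Finset.card_univ, Fintype.card_fin]
    · have : avgDegOn G Finset.univ = avgDeg G := rfl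
      rw [this]
      linarith
  have hmem := Nat.sInf_mem hne
  obtain ⟨S, hScard, hSavg⟩ := hmem
  unfold cruxSize
  by_contra hcon
  push_neg at hcon
  have hlt : ((sInf {m | ∃ S : Finset (Fin n), S.card = m ∧
      (1 / 100 : ℝ) * avgDeg G ≤ avgDegOn G S} : ℕ) : ℝ) < (n:ℝ)/1000 := hcon
  rw [← hScard] at hlt
  have := part2 S (le_of_lt hlt)
  have heq : (1 / 100 : ℝ) * avgDeg G = avgDeg G / 100 := by ring
  rw [heq] at hSavg
  linarith

end Main


section Final
set_option linter.unusedSectionVars false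
set_option linter.unusedVariables false

lemma exp_sub_one_le {y : ℝ} (h0 : 0 ≤ y) (h2 : y ≤ 1/2) : Real.exp y - 1 ≤ 2 * y := by
  have h := Real.add_one_le_exp (-y)
  have hpos := Real.exp_pos y
  have h' : (1 - y) * Real.exp y ≤ 1 := by
    have hm := mul_le_mul_of_nonneg_right h hpos.le
    rw [← Real.exp_add] at hm
    simp only [neg_add_cancel, Real.exp_zero] at hm
    nlinarith
  nlinarith

lemma main_bound (n : ℕ) (p : ℝ) (hp0 : 0 ≤ p) (hp1 : p ≤ 1) (hn : 2 ≤ n)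
    (hnp : 10 ^ 7 * Real.log n ≤ (n : ℝ) * p) :
    1 - 3 / (n : ℝ) ≤ erProb n p (fun G =>
      ((n : ℝ) / 1000 ≤ (cruxSize (1 / 100) G : ℝ)) ∧
      ∀ S : Finset (Fin n), (S.card : ℝ) ≤ (n : ℝ) / 1000 →
        avgDegOn G S < avgDeg G / 100) := by
  have hn2 : (2:ℝ) ≤ (n:ℝ) := by exact_mod_cast hn
  have hn0 : (0:ℝ) < n := by linarith
  have hlogn : 0 < Real.log n := Real.log_pos (by linarith)
  have hppos : 0 < p := by nlinarith
  -- the two bad events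
  have hBad1 : erProb n p (fun G => (degSum G Finset.univ : ℝ) ≤ 2 * ((n:ℝ)^2 * p / 8))
      ≤ 1 / (n:ℝ) := by
    refine le_trans (erProb_degSum_univ_le hp0 hp1 ((n:ℝ)^2 * p / 8) (by positivity)) ?_
    have hU := card_EdgeU_ge hn
    have hlog2 : Real.log 2 ≤ 0.7 := le_of_lt (lt_trans Real.log_two_lt_d9 (by norm_num))
    have hlog2' : 0 ≤ Real.log 2 := Real.log_nonneg one_le_two
    have hn2p : 32 * Real.log n ≤ (n:ℝ)^2 * p := by
      have h1 := mul_le_mul_of_nonneg_left hnp hn0.le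
      nlinarith
    have hexp : (n:ℝ)^2 * p / 8 * Real.log 2 - p * ((EdgeU n).card:ℝ) / 2
        ≤ -(Real.log n) := by
      have h1 : p * ((n:ℝ)^2/4) ≤ p * ((EdgeU n).card:ℝ) :=
        mul_le_mul_of_nonneg_left hU hp0
      nlinarith
    calc _ ≤ Real.exp (-(Real.log n)) := Real.exp_le_exp.2 hexp
      _ = 1 / (n:ℝ) := by rw [Real.exp_neg, Real.exp_log hn0, one_div]
  have hBadS : ∀ S ∈ Finset.univ.powerset.filter
      (fun S : Finset (Fin n) => S.Nonempty ∧ (S.card:ℝ) ≤ (n:ℝ)/1000),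
      erProb n p (fun G => 2 * ((S.card:ℝ) * (n:ℝ) * p / 800) ≤ (degSum G S : ℝ))
        ≤ Real.exp (-(3000 * Real.log n)) ^ S.card := by
    intro S hS
    rw [Finset.mem_filter] at hS
    obtain ⟨-, hSne, hScard⟩ := hS
    have hm0 : (0:ℝ) ≤ (S.card:ℝ) := by positivity
    refine le_trans (erProb_degSum_ge hp0 hp1 S ((S.card:ℝ) * (n:ℝ) * p / 800)) ?_
    have hT : 2 * ((edgesIn S).card:ℝ) ≤ (S.card:ℝ)^2 := by
      exact_mod_cast two_mul_edgesIn_card_le S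
    have he1 : Real.exp 1 ≤ 2.7182818286 := le_of_lt Real.exp_one_lt_d9
    have he1' : 1 ≤ Real.exp 1 := by
      have := Real.add_one_le_exp (1:ℝ); linarith
    have hT2 : ((edgesIn S).card:ℝ) ≤ (S.card:ℝ) * (n:ℝ) / 2000 := by nlinarith
    have hpT : p * ((edgesIn S).card:ℝ) ≤ p * ((S.card:ℝ) * (n:ℝ) / 2000) :=
      mul_le_mul_of_nonneg_left hT2 hp0
    have hpT0 : 0 ≤ p * ((edgesIn S).card:ℝ) := by positivity
    have hmn := mul_le_mul_of_nonneg_left hnp hm0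
    have hexp : (Real.exp 1 - 1) * p * ((edgesIn S).card:ℝ) - (S.card:ℝ) * (n:ℝ) * p / 800
        ≤ -(3000 * (S.card:ℝ) * Real.log n) := by nlinarith
    calc _ ≤ Real.exp (-(3000 * (S.card:ℝ) * Real.log n)) := Real.exp_le_exp.2 hexp
      _ = Real.exp (-(3000 * Real.log n)) ^ S.card := by
          rw [← Real.exp_nat_mul]
          congr 1
          push_cast
          ring
  -- the union bound sum
  have hx0 : (0:ℝ) ≤ Real.exp (-(3000 * Real.log n)) := (Real.exp_pos _).le
  have hxle : Real.exp (-(3000 * Real.log n)) ≤ 1 / (n:ℝ)^2 := by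
    have h1 : -(3000 * Real.log n) ≤ -((2:ℝ) * Real.log n) := by nlinarith
    calc Real.exp (-(3000 * Real.log n)) ≤ Real.exp (-((2:ℝ) * Real.log n)) :=
          Real.exp_le_exp.2 h1
      _ = 1 / (n:ℝ)^2 := by
          rw [Real.exp_neg, show ((2:ℝ) * Real.log n) = ((2:ℕ):ℝ) * Real.log n by norm_num,
            Real.exp_nat_mul, Real.exp_log hn0, one_div]
  have hsum : ∑ S ∈ Finset.univ.powerset.filter
      (fun S : Finset (Fin n) => S.Nonempty ∧ (S.card:ℝ) ≤ (n:ℝ)/1000),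
      Real.exp (-(3000 * Real.log n)) ^ S.card ≤ 2 / (n:ℝ) := by
    have hsub : Finset.univ.powerset.filter
        (fun S : Finset (Fin n) => S.Nonempty ∧ (S.card:ℝ) ≤ (n:ℝ)/1000)
        ⊆ (Finset.univ.powerset : Finset (Finset (Fin n))).erase ∅ := by
      intro S hS
      rw [Finset.mem_filter] at hS
      rw [Finset.mem_erase]
      exact ⟨Finset.nonempty_iff_ne_empty.1 hS.2.1, hS.1⟩
    refine le_trans (Finset.sum_le_sum_of_subset_of_nonneg hsub
      (fun S _ _ => by positivity)) ?_
    have herase : ∑ S ∈ (Finset.univ.powerset : Finset (Finset (Fin n))).erase ∅,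
        Real.exp (-(3000 * Real.log n)) ^ S.card
        = (1 + Real.exp (-(3000 * Real.log n))) ^ n - 1 := by
      have hadd := Finset.add_sum_erase (Finset.univ.powerset : Finset (Finset (Fin n)))
        (fun S => Real.exp (-(3000 * Real.log n)) ^ S.card)
        (Finset.empty_mem_powerset Finset.univ)
      rw [sum_pow_card, Finset.card_univ, Fintype.card_fin] at hadd
      simp only [Finset.card_empty, pow_zero] at hadd
      linarith
    rw [herase]
    have hpow : (1 + Real.exp (-(3000 * Real.log n))) ^ n
        ≤ Real.exp ((n:ℝ) * Real.exp (-(3000 * Real.log n))) := by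
      calc (1 + Real.exp (-(3000 * Real.log n))) ^ n
          ≤ (Real.exp (Real.exp (-(3000 * Real.log n)))) ^ n := by
            apply pow_le_pow_left₀ (by positivity)
            have := Real.add_one_le_exp (Real.exp (-(3000 * Real.log n)))
            linarith
        _ = Real.exp ((n:ℝ) * Real.exp (-(3000 * Real.log n))) := by
            rw [← Real.exp_nat_mul]
      -- done
    have hy1 : (n:ℝ) * Real.exp (-(3000 * Real.log n)) ≤ 1/2 := by
      have : (n:ℝ) * Real.exp (-(3000 * Real.log n)) ≤ (n:ℝ) * (1/(n:ℝ)^2) :=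
        mul_le_mul_of_nonneg_left hxle hn0.le
      have h2 : (n:ℝ) * (1/(n:ℝ)^2) = 1/(n:ℝ) := by field_simp
      rw [h2] at this
      have : (1:ℝ)/(n:ℝ) ≤ 1/2 := by
        rw [div_le_div_iff₀ hn0 two_pos]
        linarith
      linarith [this]
    have hy0 : 0 ≤ (n:ℝ) * Real.exp (-(3000 * Real.log n)) := by positivity
    have hfin := exp_sub_one_le hy0 hy1
    have h2nx : 2 * ((n:ℝ) * Real.exp (-(3000 * Real.log n))) ≤ 2/(n:ℝ) := by
      have := mul_le_mul_of_nonneg_left hxle hn0.le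
      have h2 : (n:ℝ) * (1/(n:ℝ)^2) = 1/(n:ℝ) := by field_simp
      rw [h2] at this
      calc 2 * ((n:ℝ) * Real.exp (-(3000 * Real.log n))) ≤ 2 * (1/(n:ℝ)) := by linarith
        _ = 2/(n:ℝ) := by ring
    linarith
  -- assemble
  have hor : erProb n p (fun G =>
      ((degSum G Finset.univ : ℝ) ≤ 2 * ((n:ℝ)^2 * p / 8)) ∨
      (∃ S ∈ Finset.univ.powerset.filter
        (fun S : Finset (Fin n) => S.Nonempty ∧ (S.card:ℝ) ≤ (n:ℝ)/1000),
        2 * ((S.card:ℝ) * (n:ℝ) * p / 800) ≤ (degSum G S : ℝ)))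
      ≤ 3 / (n:ℝ) := by
    refine le_trans (erProb_or_le hp0 hp1 _ _) ?_
    have hex := le_trans (erProb_exists_le hp0 hp1 (Finset.univ.powerset.filter
        (fun S : Finset (Fin n) => S.Nonempty ∧ (S.card:ℝ) ≤ (n:ℝ)/1000))
        (fun S G => 2 * ((S.card:ℝ) * (n:ℝ) * p / 800) ≤ (degSum G S : ℝ)))
      (le_trans (Finset.sum_le_sum hBadS) hsum)
    have h3 : (1:ℝ)/(n:ℝ) + 2/(n:ℝ) = 3/(n:ℝ) := by ring
    linarith
  have hmono := erProb_mono (n := n) hp0 hp1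
    (E := fun G => ¬ (((degSum G Finset.univ : ℝ) ≤ 2 * ((n:ℝ)^2 * p / 8)) ∨
      (∃ S ∈ Finset.univ.powerset.filter
        (fun S : Finset (Fin n) => S.Nonempty ∧ (S.card:ℝ) ≤ (n:ℝ)/1000),
        2 * ((S.card:ℝ) * (n:ℝ) * p / 800) ≤ (degSum G S : ℝ))))
    (F := fun G =>
      ((n : ℝ) / 1000 ≤ (cruxSize (1 / 100) G : ℝ)) ∧
      ∀ S : Finset (Fin n), (S.card : ℝ) ≤ (n : ℝ) / 1000 →
        avgDegOn G S < avgDeg G / 100)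
    (by
      intro A hA hnb
      rw [not_or] at hnb
      obtain ⟨h1, h2⟩ := hnb
      push_neg at h2
      exact good_event hn hppos _ h1 (fun S hS => not_le.2 (h2 S hS)))
  have hcompl := erProb_add_compl (n := n) (p := p)
    (fun G => ((degSum G Finset.univ : ℝ) ≤ 2 * ((n:ℝ)^2 * p / 8)) ∨
      (∃ S ∈ Finset.univ.powerset.filter
        (fun S : Finset (Fin n) => S.Nonempty ∧ (S.card:ℝ) ≤ (n:ℝ)/1000),
        2 * ((S.card:ℝ) * (n:ℝ) * p / 800) ≤ (degSum G S : ℝ)))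
  linarith

end Final

/-- if `p = ω(log n / n)` then w.h.p. `G(n,p)` has `c(G) ≥ n/1000`; that is,
every `S` with `|S| ≤ n/1000` induces average degree less than `d(G)/100`. -/
theorem statement_12 (p : ℕ → ℝ) (hp : ∀ n, 0 ≤ p n ∧ p n ≤ 1)
    (hω : ∀ C : ℝ, ∃ n₀ : ℕ, ∀ n ≥ n₀, C * Real.log n / (n : ℝ) ≤ p n) :
    Filter.Tendsto
      (fun n => erProb n (p n) fun G =>
        (n : ℝ) / 1000 ≤ (cruxSize (1 / 100) G : ℝ) ∧
        ∀ S : Finset (Fin n), (S.card : ℝ) ≤ (n : ℝ) / 1000 →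
          avgDegOn G S < avgDeg G / 100)
      Filter.atTop (nhds 1) := by
  obtain ⟨n₀, hn₀⟩ := hω (10 ^ 7)
  have hlow : Filter.Tendsto (fun n : ℕ => 1 - 3 / (n:ℝ)) Filter.atTop (nhds 1) := by
    have h := tendsto_const_div_atTop_nhds_zero_nat (3:ℝ)
    have h2 := Filter.Tendsto.const_sub (1:ℝ) h
    simpa using h2
  have hhigh : Filter.Tendsto (fun _ : ℕ => (1:ℝ)) Filter.atTop (nhds 1) := tendsto_const_nhds
  refine tendsto_of_tendsto_of_tendsto_of_le_of_le' hlow hhigh ?_ ?_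
  · filter_upwards [Filter.eventually_ge_atTop (max n₀ 2)] with n hn
    have hn2 : 2 ≤ n := le_trans (le_max_right _ _) hn
    have hn₀' : n₀ ≤ n := le_trans (le_max_left _ _) hn
    have hn0 : (0:ℝ) < n := by
      have : 0 < n := by omega
      exact_mod_cast this
    have hnp : 10 ^ 7 * Real.log n ≤ (n:ℝ) * p n := by
      have h := hn₀ n hn₀'
      rw [div_le_iff₀ hn0] at h
      linarith
    exact main_bound n (p n) (hp n).1 (hp n).2 hn2 hnp
  · filter_upwards with n
    exact erProb_le_one (hp n).1 (hp n).2 _
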